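/- For every weighted full binary tree T whose leaf values are all nonnegative and whose node weights are admissible (β_L, β_R ≥ 0 and β_L + β_R = 1 at every internal node), one has G(T)² ≤ leafSum(T). (This is the upper-bound direction of Proposition 1: the received signal power over a splitting tree of STAR-RISs never exceeds the sum of the maximum channel power gains of all its end-to-end paths.) -/
import Mathlib


/-- A weighted full binary tree: a leaf carries the maximum end-to-end channel power gain of
one beam-routing path; an internal node (a splitting STAR-RIS) carries its two
reflection/transmission amplitudes `βL`, `βR` and two subtrees. -/
inductive WTree : Type
  | leaf (F : ℝ) : WTree
  | node (βL βR : ℝ) (l r : WTree) : WTree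

namespace WTree

/-- The sum of all leaf values (sum of maximum channel power gains of all paths). -/
def leafSum : WTree → ℝ
  | leaf F => F
  | node _ _ l r => leafSum l + leafSum r

/-- The amplitude `G(T)` of the coherently combined signal over the splitting tree. -/
noncomputable def G : WTree → ℝ
  | leaf F => Real.sqrt F
  | node βL βR l r => Real.sqrt βL * G l + Real.sqrt βR * G r

/-- All leaf values are nonnegative. -/
def leavesNonneg : WTree → Prop
  | leaf F => 0 ≤ F
  | node _ _ l r => leavesNonneg l ∧ leavesNonneg r

/-- All leaf values are strictly positive. -/
def leavesPos : WTree → Prop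
  | leaf F => 0 < F
  | node _ _ l r => leavesPos l ∧ leavesPos r

/-- A weight assignment is admissible if at every internal node `βL, βR ≥ 0` and
`βL + βR = 1`. -/
def admissible : WTree → Prop
  | leaf _ => True
  | node βL βR l r => 0 ≤ βL ∧ 0 ≤ βR ∧ βL + βR = 1 ∧ admissible l ∧ admissible r

end WTree

/-- Upper-bound direction of Proposition 1: for any admissible weights, the received
signal power over a splitting tree of STAR-RISs never exceeds the sum of the maximum
channel power gains of all its end-to-end paths. -/
theorem tree_power_upper_bound (T : WTree)
    (hleaves : T.leavesNonneg) (hadm : T.admissible) :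
    (T.G) ^ 2 ≤ T.leafSum := by
  induction T with
  | leaf F =>
    simp [WTree.G, WTree.leafSum, Real.sq_sqrt hleaves]
  | node βL βR l r ihl ihr =>
    obtain ⟨hl, hr⟩ := hleaves
    obtain ⟨hβL, hβR, hsum, hal, har⟩ := hadm
    have Hl := ihl hl hal
    have Hr := ihr hr har
    simp only [WTree.G, WTree.leafSum]
    have h1 : Real.sqrt βL ^ 2 = βL := Real.sq_sqrt hβL
    have h2 : Real.sqrt βR ^ 2 = βR := Real.sq_sqrt hβR
    nlinarith [sq_nonneg (Real.sqrt βL * l.G - Real.sqrt βR * r.G),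
      sq_nonneg (Real.sqrt βR * l.G - Real.sqrt βL * r.G),
      sq_nonneg l.G, sq_nonneg r.G]
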